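/- Let q be a squarefree bivariate polynomial of degree k ≤ n, and let X_d be a set of exactly d = d(n,k) points on the zero set of q. Then X_d is n-independent if and only if every p ∈ Π_n vanishing on X_d factors as p = q·r with r ∈ Π_{n−k}. -/

import Mathlib

open MvPolynomial
open scoped Classical

/-- Evaluation of a bivariate polynomial at a point of the plane. -/
noncomputable def evalPt (p : MvPolynomial (Fin 2) ℝ) (A : ℝ × ℝ) : ℝ :=
  MvPolynomial.eval ![A.1, A.2] p

/-- `p` is an `n`-fundamental polynomial of the node `A` with respect to the node set `X`. -/
def IsFund (n : ℕ) (X : Finset (ℝ × ℝ)) (A : ℝ × ℝ)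
    (p : MvPolynomial (Fin 2) ℝ) : Prop :=
  p.totalDegree ≤ n ∧ evalPt p A = 1 ∧ ∀ B ∈ X, B ≠ A → evalPt p B = 0

/-- The node set `X` is `n`-independent. -/
def Indep (n : ℕ) (X : Finset (ℝ × ℝ)) : Prop :=
  ∀ A ∈ X, ∃ p, IsFund n X A p

/-- `d(n,k) = N_n - N_{n-k} = k(2n+3-k)/2`. -/
def dd (n k : ℕ) : ℕ := k * (2 * n + 3 - k) / 2

/-- The node set `X` is `n`-poised. -/
def Poised (n : ℕ) (X : Finset (ℝ × ℝ)) : Prop :=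
  X.card = (n + 1) * (n + 2) / 2 ∧
  ∀ p : MvPolynomial (Fin 2) ℝ, p.totalDegree ≤ n →
    (∀ A ∈ X, evalPt p A = 0) → p = 0

/-- The space of polynomials of total degree at most `n` vanishing on `X`. -/
noncomputable def vanishSp (n : ℕ) (X : Finset (ℝ × ℝ)) :
    Submodule ℝ (MvPolynomial (Fin 2) ℝ) :=
  MvPolynomial.restrictTotalDegree (Fin 2) ℝ n ⊓
    ⨅ A ∈ X, LinearMap.ker ((MvPolynomial.aeval (R := ℝ) ![A.1, A.2]).toLinearMap)

/-! ### Auxiliary lemmas -/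

lemma aeval_eq_evalPt' (p : MvPolynomial (Fin 2) ℝ) (A : ℝ × ℝ) :
    MvPolynomial.aeval (R := ℝ) ![A.1, A.2] p = evalPt p A := by
  rw [evalPt, MvPolynomial.aeval_def, MvPolynomial.eval, Algebra.algebraMap_self]; rfl

def triFinset (m : ℕ) : Finset (ℕ × ℕ) :=
  (Finset.range (m + 1)).biUnion fun s => Finset.HasAntidiagonal.antidiagonal s

lemma mem_triFinset (m : ℕ) (x : ℕ × ℕ) : x ∈ triFinset m ↔ x.1 + x.2 ≤ m := by
  simp only [triFinset, Finset.mem_biUnion, Finset.mem_range, Finset.HasAntidiagonal.mem_antidiagonal]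
  constructor
  · rintro ⟨s, hs, h⟩; omega
  · intro h; exact ⟨x.1 + x.2, by omega, rfl⟩

lemma card_triFinset (m : ℕ) : (triFinset m).card = (m + 1) * (m + 2) / 2 := by
  rw [triFinset, Finset.card_biUnion]
  · have h1 : ∑ s ∈ Finset.range (m + 1), (Finset.HasAntidiagonal.antidiagonal s).card
        = ∑ s ∈ Finset.range (m + 1), (s + 1) :=
      Finset.sum_congr rfl fun s _ => Finset.Nat.card_antidiagonal s
    rw [h1]
    have h2 : ∑ s ∈ Finset.range (m + 1), (s + 1) = ∑ i ∈ Finset.range (m + 2), i := by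
      rw [Finset.sum_range_succ' (fun i => i) (m + 1)]
      simp
    have h3 : (∑ i ∈ Finset.range (m + 2), i) * 2 = (m + 1) * (m + 2) := by
      simpa [Nat.mul_comm] using Finset.sum_range_id_mul_two (m + 2)
    have h4 : 2 ∣ (m + 1) * (m + 2) := (Nat.even_mul_succ_self (m + 1)).two_dvd
    omega
  · intro s _ t _ hst
    rw [Function.onFun, Finset.disjoint_left]
    intro a ha ha'
    rw [Finset.HasAntidiagonal.mem_antidiagonal] at ha ha'
    omega

noncomputable def degEquiv (m : ℕ) :
    {d : Fin 2 →₀ ℕ // (d.sum fun _ e => e) ≤ m} ≃ {x : ℕ × ℕ // x.1 + x.2 ≤ m} :=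
  (Finsupp.equivFunOnFinite.trans (finTwoArrowEquiv ℕ)).subtypeEquiv (fun d => by
    show (d.sum fun _ e => e) ≤ m ↔ d 0 + d 1 ≤ m
    rw [Finsupp.sum_fintype _ _ (fun _ => rfl), Fin.sum_univ_two])

lemma finrank_restrict (m : ℕ) :
    Module.finrank ℝ (MvPolynomial.restrictTotalDegree (Fin 2) ℝ m)
      = (m + 1) * (m + 2) / 2 := by
  haveI fA : Fintype {x : ℕ × ℕ // x.1 + x.2 ≤ m} :=
    Fintype.ofFinset (triFinset m) (mem_triFinset m)
  haveI fB : Fintype ↥{d : Fin 2 →₀ ℕ | (d.sum fun _ e => e) ≤ m} :=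
    Fintype.ofEquiv _ (degEquiv m).symm
  have b := MvPolynomial.basisRestrictSupport ℝ
    { d : Fin 2 →₀ ℕ | (d.sum fun _ e => e) ≤ m }
  have h1 : Module.finrank ℝ (MvPolynomial.restrictTotalDegree (Fin 2) ℝ m)
      = Fintype.card ↥{ d : Fin 2 →₀ ℕ | (d.sum fun _ e => e) ≤ m } :=
    Module.finrank_eq_card_basis b
  have h2 : Fintype.card ↥{ d : Fin 2 →₀ ℕ | (d.sum fun _ e => e) ≤ m }
      = Fintype.card {x : ℕ × ℕ // x.1 + x.2 ≤ m} := Fintype.card_congr (degEquiv m)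
  rw [h1, h2, Fintype.card_of_subtype (triFinset m) (mem_triFinset m)]
  exact card_triFinset m

noncomputable def evalMap (n : ℕ) (X : Finset (ℝ × ℝ)) :
    (MvPolynomial.restrictTotalDegree (Fin 2) ℝ n) →ₗ[ℝ] (↥X → ℝ) :=
  LinearMap.pi fun A => ((MvPolynomial.aeval (R := ℝ)
      ![(A : ℝ × ℝ).1, (A : ℝ × ℝ).2]).toLinearMap).comp
    (MvPolynomial.restrictTotalDegree (Fin 2) ℝ n).subtype

lemma evalMap_apply (n : ℕ) (X : Finset (ℝ × ℝ))
    (p : MvPolynomial.restrictTotalDegree (Fin 2) ℝ n) (A : ↥X) :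
    evalMap n X p A = evalPt (p : MvPolynomial (Fin 2) ℝ) A := by
  simp [evalMap, aeval_eq_evalPt']; rfl

lemma indep_iff_surj (n : ℕ) (X : Finset (ℝ × ℝ)) :
    Indep n X ↔ Function.Surjective (evalMap n X) := by
  constructor
  · intro h
    rw [← LinearMap.range_eq_top, eq_top_iff]
    intro f _
    have hf : f = ∑ a : ↥X, f a • (Pi.single a 1 : ↥X → ℝ) := by
      funext b
      rw [Finset.sum_apply]
      simp only [Pi.smul_apply, Pi.single_apply, smul_eq_mul, mul_ite, mul_one, mul_zero]
      simp [Finset.sum_ite_eq]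
    rw [hf]
    refine Submodule.sum_mem _ fun a _ => Submodule.smul_mem _ _ ?_
    obtain ⟨p, hp⟩ := h a a.2
    refine ⟨⟨p, (MvPolynomial.mem_restrictTotalDegree _ _ _).2 hp.1⟩, ?_⟩
    funext b
    rw [evalMap_apply]
    by_cases hb : b = a
    · subst hb
      rw [Pi.single_eq_same]
      exact hp.2.1
    · rw [Pi.single_eq_of_ne hb]
      exact hp.2.2 b b.2 (fun e => hb (Subtype.ext e))
  · intro h A hA
    obtain ⟨v, hv⟩ := h ((Pi.single (⟨A, hA⟩ : ↥X) 1 : ↥X → ℝ))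
    refine ⟨(v : MvPolynomial (Fin 2) ℝ),
      (MvPolynomial.mem_restrictTotalDegree _ _ _).1 v.2, ?_, ?_⟩
    · have h1 := congrFun hv (⟨A, hA⟩ : ↥X)
      rw [evalMap_apply] at h1
      rw [show A = ((⟨A, hA⟩ : ↥X) : ℝ × ℝ) from rfl, h1, Pi.single_eq_same]
    · intro B hB hBA
      have h1 := congrFun hv (⟨B, hB⟩ : ↥X)
      rw [evalMap_apply] at h1
      rw [show B = ((⟨B, hB⟩ : ↥X) : ℝ × ℝ) from rfl, h1,
        Pi.single_eq_of_ne (fun e => hBA (congrArg Subtype.val e))]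

theorem stmt7 (n k : ℕ) (hk : k ≤ n) (q : MvPolynomial (Fin 2) ℝ)
    (hq : q.totalDegree = k) (hsf : Squarefree q)
    (X : Finset (ℝ × ℝ)) (hXq : ∀ A ∈ X, evalPt q A = 0)
    (hcard : X.card = dd n k) :
    Indep n X ↔
      ∀ p : MvPolynomial (Fin 2) ℝ, p.totalDegree ≤ n →
        (∀ A ∈ X, evalPt p A = 0) →
        ∃ r : MvPolynomial (Fin 2) ℝ, r.totalDegree ≤ n - k ∧ p = q * r := by
  classical
  have hq0 : q ≠ 0 := hsf.ne_zero
  set Vn := MvPolynomial.restrictTotalDegree (Fin 2) ℝ n with hVn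
  set E := evalMap n X with hE
  set W : Submodule ℝ (MvPolynomial (Fin 2) ℝ) :=
    Submodule.map (LinearMap.mulLeft ℝ q)
      (MvPolynomial.restrictTotalDegree (Fin 2) ℝ (n - k)) with hWdef
  set K : Submodule ℝ (MvPolynomial (Fin 2) ℝ) :=
    Submodule.map Vn.subtype (LinearMap.ker E) with hKdef
  have hmemK : ∀ p : MvPolynomial (Fin 2) ℝ,
      p ∈ K ↔ (p.totalDegree ≤ n ∧ ∀ A ∈ X, evalPt p A = 0) := by
    intro p
    constructor
    · rintro ⟨v, hv, rfl⟩
      refine ⟨(MvPolynomial.mem_restrictTotalDegree _ _ _).1 v.2, fun A hA => ?_⟩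
      have h1 := congrFun (LinearMap.mem_ker.1 hv) (⟨A, hA⟩ : ↥X)
      rw [evalMap_apply] at h1
      simpa using h1
    · rintro ⟨h1, h2⟩
      have hker : (⟨p, (MvPolynomial.mem_restrictTotalDegree _ _ _).2 h1⟩ : Vn)
          ∈ LinearMap.ker E := by
        rw [LinearMap.mem_ker]
        funext a
        rw [evalMap_apply]
        simpa using h2 a a.2
      exact ⟨_, hker, rfl⟩
  have hmemW : ∀ p : MvPolynomial (Fin 2) ℝ,
      p ∈ W ↔ ∃ r : MvPolynomial (Fin 2) ℝ, r.totalDegree ≤ n - k ∧ p = q * r := by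
    intro p
    constructor
    · rintro ⟨r, hr, rfl⟩
      exact ⟨r, (MvPolynomial.mem_restrictTotalDegree _ _ _).1 hr, rfl⟩
    · rintro ⟨r, hr, rfl⟩
      exact ⟨r, (MvPolynomial.mem_restrictTotalDegree _ _ _).2 hr, rfl⟩
  have hWK : W ≤ K := by
    intro p hp
    obtain ⟨r, hr, rfl⟩ := (hmemW p).1 hp
    refine (hmemK _).2 ⟨?_, fun A hA => ?_⟩
    · calc (q * r).totalDegree ≤ q.totalDegree + r.totalDegree :=
          MvPolynomial.totalDegree_mul q r
        _ ≤ k + (n - k) := by rw [hq]; exact Nat.add_le_add_left hr k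
        _ = n := by omega
    · have h0 := hXq A hA
      rw [evalPt] at h0 ⊢
      rw [map_mul, h0, zero_mul]
  have hinj : Function.Injective (LinearMap.mulLeft ℝ q) := by
    intro a b h
    rw [LinearMap.mulLeft_apply, LinearMap.mulLeft_apply] at h
    exact mul_left_cancel₀ hq0 h
  have hfW : Module.finrank ℝ W = (n - k + 1) * (n - k + 2) / 2 := by
    rw [hWdef, ← finrank_restrict (n - k)]
    exact (Submodule.equivMapOfInjective _ hinj _).finrank_eq.symm
  have hfK : Module.finrank ℝ K = Module.finrank ℝ (LinearMap.ker E) :=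
    Submodule.finrank_map_subtype_eq Vn (LinearMap.ker E)
  have hrn : Module.finrank ℝ (LinearMap.ker E) + Module.finrank ℝ (LinearMap.range E)
      = (n + 1) * (n + 2) / 2 := by
    rw [← finrank_restrict n, add_comm]
    exact LinearMap.finrank_range_add_finrank_ker E
  have hfX : Module.finrank ℝ (↥X → ℝ) = X.card := by
    rw [Module.finrank_fintype_fun_eq_card, Fintype.card_coe]
  have harith : (n + 1) * (n + 2) / 2 = (n - k + 1) * (n - k + 2) / 2 + dd n k := by
    have hid : (n + 1) * (n + 2) = (n - k + 1) * (n - k + 2) + k * (2 * n + 3 - k) := by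
      obtain ⟨m, rfl⟩ : ∃ m, n = m + k := ⟨n - k, by omega⟩
      rw [show m + k - k = m by omega, show 2 * (m + k) + 3 - k = 2 * m + k + 3 by omega]
      ring
    have h1 : 2 ∣ (n + 1) * (n + 2) := (Nat.even_mul_succ_self (n + 1)).two_dvd
    have h2 : 2 ∣ (n - k + 1) * (n - k + 2) := (Nat.even_mul_succ_self (n - k + 1)).two_dvd
    simp only [dd]
    omega
  haveI hKfd : FiniteDimensional ℝ K :=
    Submodule.finiteDimensional_of_le (Submodule.map_subtype_le Vn (LinearMap.ker E))
  constructor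
  · intro hind p hdeg hvan
    have hrange : LinearMap.range E = ⊤ :=
      LinearMap.range_eq_top.2 ((indep_iff_surj n X).1 hind)
    have hfr : Module.finrank ℝ (LinearMap.range E) = dd n k := by
      rw [hrange, finrank_top, hfX, hcard]
    have hdim : Module.finrank ℝ K = (n - k + 1) * (n - k + 2) / 2 := by omega
    have hKW : W = K := Submodule.eq_of_le_of_finrank_le hWK (by rw [hdim, hfW])
    exact (hmemW p).1 (hKW ▸ (hmemK p).2 ⟨hdeg, hvan⟩)
  · intro hfac
    have hKW : K = W :=
      le_antisymm (fun p hp => (hmemW p).2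
        (hfac p ((hmemK p).1 hp).1 ((hmemK p).1 hp).2)) hWK
    have hdimK : Module.finrank ℝ (LinearMap.ker E) = (n - k + 1) * (n - k + 2) / 2 := by
      rw [← hfK, hKW, hfW]
    apply (indep_iff_surj n X).2
    rw [← LinearMap.range_eq_top]
    apply Submodule.eq_top_of_finrank_eq
    have hgoal : Module.finrank ℝ (LinearMap.range E) = X.card := by omega
    rw [hfX]
    exact hgoal
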